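/- arXiv:1508.04514 — 6 statements merged into one kernel-verified Lean document; each statement's English description precedes it below -/
import Mathlib

section
/- Let S be a real m×n matrix, G a real k×n matrix, and r a natural number. Let G⁺ denote the Moore–Penrose inverse of G, and let B be any best rank-r approximation of the matrix S·G⁺·G (in the Frobenius norm). Then the matrix F₀ = B·G⁺ has rank at most r and is a minimizer of the rank-constrained least squares problem: for every real m×k matrix F with rank F ≤ r one has ‖S − F₀·G‖_F ≤ ‖S − F·G‖_F. -/
open Matrix

/-- Frobenius norm of a real matrix: square root of the sum of squares of entries. -/
noncomputable def frobNorm {m n : Type*} [Fintype m] [Fintype n] (A : Matrix m n ℝ) : ℝ :=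
  Real.sqrt (∑ i, ∑ j, (A i j) ^ 2)

/-- The four Penrose equations characterizing the Moore–Penrose inverse. -/
def IsMoorePenrose {m n : Type*} [Fintype m] [Fintype n]
    (G : Matrix m n ℝ) (B : Matrix n m ℝ) : Prop :=
  G * B * G = G ∧ B * G * B = B ∧ (G * B)ᵀ = G * B ∧ (B * G)ᵀ = B * G

noncomputable def fsq {m n : ℕ} (A : Matrix (Fin m) (Fin n) ℝ) : ℝ :=
  ∑ i, ∑ j, (A i j) ^ 2

lemma fsq_nonneg {m n : ℕ} (A : Matrix (Fin m) (Fin n) ℝ) : 0 ≤ fsq A :=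
  Finset.sum_nonneg fun _ _ => Finset.sum_nonneg fun _ _ => sq_nonneg _

lemma frobNorm_eq {m n : ℕ} (A : Matrix (Fin m) (Fin n) ℝ) :
    frobNorm A = Real.sqrt (fsq A) := rfl

lemma fsq_eq_trace {m n : ℕ} (A : Matrix (Fin m) (Fin n) ℝ) :
    fsq A = Matrix.trace (A * Aᵀ) := by
  simp [fsq, Matrix.trace, Matrix.mul_apply, Matrix.diag, sq]

lemma fsq_add_of_inner_zero {m n : ℕ} {A C : Matrix (Fin m) (Fin n) ℝ}
    (h : Matrix.trace (A * Cᵀ) = 0) : fsq (A + C) = fsq A + fsq C := by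
  have h2 : Matrix.trace (C * Aᵀ) = 0 := by
    rw [← Matrix.trace_transpose (C * Aᵀ)]
    simpa using h
  rw [fsq_eq_trace, fsq_eq_trace, fsq_eq_trace]
  simp [Matrix.add_mul, Matrix.mul_add, Matrix.transpose_add, Matrix.trace_add, h, h2]

lemma fsq_decomp {m n : ℕ} (P : Matrix (Fin n) (Fin n) ℝ) (hPs : Pᵀ = P)
    (hPi : P * P = P) (X : Matrix (Fin m) (Fin n) ℝ) :
    fsq X = fsq (X * P) + fsq (X - X * P) := by
  have h : Matrix.trace ((X * P) * (X - X * P)ᵀ) = 0 := by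
    have e : (X * P) * (X - X * P)ᵀ = X * P * Xᵀ - X * P * Xᵀ := by
      rw [Matrix.transpose_sub, Matrix.mul_sub, Matrix.transpose_mul, hPs]
      congr 1
      rw [Matrix.mul_assoc X P (P * Xᵀ), ← Matrix.mul_assoc P P Xᵀ, hPi, ← Matrix.mul_assoc]
    rw [e]; simp
  have h2 := fsq_add_of_inner_zero h
  have e2 : X * P + (X - X * P) = X := by abel
  rw [e2] at h2
  exact h2

lemma fsq_mul_proj_le {m n : ℕ} (P : Matrix (Fin n) (Fin n) ℝ) (hPs : Pᵀ = P)
    (hPi : P * P = P) (X : Matrix (Fin m) (Fin n) ℝ) : fsq (X * P) ≤ fsq X := by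
  rw [fsq_decomp P hPs hPi X]
  exact le_add_of_nonneg_right (fsq_nonneg _)

theorem rank_constrained_least_squares_minimizer
    {m n k : ℕ} (S : Matrix (Fin m) (Fin n) ℝ) (G : Matrix (Fin k) (Fin n) ℝ)
    (r : ℕ) (Gp : Matrix (Fin n) (Fin k) ℝ) (hGp : IsMoorePenrose G Gp)
    (B : Matrix (Fin m) (Fin n) ℝ)
    (hBrank : B.rank ≤ r)
    (hBbest : ∀ B' : Matrix (Fin m) (Fin n) ℝ, B'.rank ≤ r →
      frobNorm (S * Gp * G - B) ≤ frobNorm (S * Gp * G - B')) :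
    (B * Gp).rank ≤ r ∧
      ∀ F : Matrix (Fin m) (Fin k) ℝ, F.rank ≤ r →
        frobNorm (S - (B * Gp) * G) ≤ frobNorm (S - F * G) := by
  obtain ⟨h1, h2, h3, h4⟩ := hGp
  set P : Matrix (Fin n) (Fin n) ℝ := Gp * G with hP
  have hPs : Pᵀ = P := h4
  have hPi : P * P = P := by
    calc Gp * G * (Gp * G) = (Gp * G * Gp) * G := by rw [Matrix.mul_assoc (Gp * G) Gp G]
    _ = Gp * G := by rw [h2]
  have hGP : G * P = G := by
    rw [hP, ← Matrix.mul_assoc, h1]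
  constructor
  · exact le_trans (Matrix.rank_mul_le_left B Gp) hBrank
  · intro F hF
    have hFG : (F * G).rank ≤ r := le_trans (Matrix.rank_mul_le_left F G) hF
    have hb := hBbest (F * G) hFG
    rw [frobNorm_eq, frobNorm_eq] at hb
    have hb' : fsq (S * Gp * G - B) ≤ fsq (S * Gp * G - F * G) :=
      (Real.sqrt_le_sqrt_iff (fsq_nonneg _)).mp hb
    have hSP : S * Gp * G = S * P := by rw [hP, Matrix.mul_assoc]
    rw [hSP] at hb'
    -- decomposition for S - B * P
    have key1 : fsq (S - B * P) = fsq (S * P - B * P) + fsq (S - S * P) := by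
      have := fsq_decomp P hPs hPi (S - B * P)
      have e1 : (S - B * P) * P = S * P - B * P := by
        rw [Matrix.sub_mul, Matrix.mul_assoc, hPi]
      have e2 : S - B * P - (S * P - B * P) = S - S * P := by abel
      rw [e1, e2] at this
      exact this
    have key2 : fsq (S - F * G) = fsq (S * P - F * G) + fsq (S - S * P) := by
      have := fsq_decomp P hPs hPi (S - F * G)
      have e1 : (S - F * G) * P = S * P - F * G := by
        rw [Matrix.sub_mul, Matrix.mul_assoc, hGP]
      have e2 : S - F * G - (S * P - F * G) = S - S * P := by abel
      rw [e1, e2] at this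
      exact this
    have key3 : fsq (S * P - B * P) ≤ fsq (S * P - B) := by
      have e1 : (S * P - B) * P = S * P - B * P := by
        rw [Matrix.sub_mul, Matrix.mul_assoc, hPi]
      have := fsq_mul_proj_le P hPs hPi (S * P - B)
      rwa [e1] at this
    have final : fsq (S - B * P) ≤ fsq (S - F * G) := by
      rw [key1, key2]
      have := le_trans key3 hb'
      linarith
    have hBPG : (B * Gp) * G = B * P := by rw [hP, Matrix.mul_assoc]
    rw [frobNorm_eq, frobNorm_eq, hBPG]
    exact Real.sqrt_le_sqrt final
end

section
/- Let (F^{(q)})_{q≥0} be an MBI sequence for the objective f(F₁,…,F_p) = ‖H − Σ_{j=1}^p F_j·G_j‖_F². If the sequence of tuples F^{(q)} converges (entrywise) to a tuple F̌ = (F̌₁,…,F̌_p), then F̌ is a coordinate-wise minimum point of f on the rank-constrained domain: for every index j, rank F̌_j ≤ r_j and for every real m×n_j matrix X with rank X ≤ r_j one has f(F̌₁,…,F̌_p) ≤ f(F̌₁,…,F̌_{j−1}, X, F̌_{j+1},…,F̌_p). -/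
open Matrix

/-- The objective `f(F₁,…,F_p) = ‖H − Σ_j F_j G_j‖_F²`. -/
noncomputable def mbiObj {p m N : ℕ} (n : Fin p → ℕ)
    (H : Matrix (Fin m) (Fin N) ℝ)
    (G : ∀ j : Fin p, Matrix (Fin (n j)) (Fin N) ℝ)
    (F : ∀ j : Fin p, Matrix (Fin m) (Fin (n j)) ℝ) : ℝ :=
  (frobNorm (H - ∑ j, F j * G j)) ^ 2

/-- An MBI (maximum block improvement) sequence for the objective `mbiObj`:
every iterate satisfies the rank constraints, and each new iterate improves on
every single-block update of the previous iterate. -/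
def IsMBISequence {p m N : ℕ} (n r : Fin p → ℕ)
    (H : Matrix (Fin m) (Fin N) ℝ)
    (G : ∀ j : Fin p, Matrix (Fin (n j)) (Fin N) ℝ)
    (Fseq : ℕ → ∀ j : Fin p, Matrix (Fin m) (Fin (n j)) ℝ) : Prop :=
  (∀ q (j : Fin p), (Fseq q j).rank ≤ r j) ∧
    (∀ q (j : Fin p) (X : Matrix (Fin m) (Fin (n j)) ℝ), X.rank ≤ r j →
      mbiObj n H G (Fseq (q + 1)) ≤ mbiObj n H G (Function.update (Fseq q) j X))

open Filter in
/-- Rank is lower semicontinuous: an entrywise limit of matrices of rank at most `r`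
has rank at most `r`. -/
lemma rank_le_of_tendsto {mm nn r : ℕ} (Aq : ℕ → Matrix (Fin mm) (Fin nn) ℝ)
    (A : Matrix (Fin mm) (Fin nn) ℝ)
    (hA : Tendsto Aq atTop (nhds A))
    (hr : ∀ q, (Aq q).rank ≤ r) : A.rank ≤ r := by
  set k := A.rank with hk
  obtain ⟨b, hbsub, hbspan, hbind⟩ := exists_linearIndependent ℝ (Set.range Aᵀ)
  have hbfin : b.Finite := (Set.finite_range Aᵀ).subset hbsub
  haveI := hbfin.fintype
  have hcard : Fintype.card b = k := by
    rw [hk, Matrix.rank_eq_finrank_span_cols, Matrix.col, ← hbspan,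
      finrank_span_set_eq_card hbind, Set.toFinset_card]
  let e : Fin k ≃ b := (Fintype.equivFinOfCardEq hcard).symm
  choose g hg using fun i : Fin k => Set.mem_range.mp (hbsub (e i).2)
  have hind : LinearIndependent ℝ (fun i : Fin k => Aᵀ (g i)) := by
    have : (fun i : Fin k => Aᵀ (g i)) = (fun x : b => (x : Fin mm → ℝ)) ∘ e := by
      funext i; simp [hg]
    rw [this]
    exact hbind.comp e e.injective
  set B := A.submatrix id g with hB
  have hBT : Bᵀ = fun i => Aᵀ (g i) := by
    funext i j; simp [hB]
  -- the Gram matrix of the chosen columns of A is invertible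
  have hinj : Function.Injective B.mulVec := by
    rw [Matrix.mulVec_injective_iff, Matrix.col, hBT]; exact hind
  have hker : LinearMap.ker (Bᵀ * B).mulVecLin = ⊥ := by
    rw [Matrix.ker_mulVecLin_transpose_mul_self]
    exact LinearMap.ker_eq_bot.mpr hinj
  have hinj2 : Function.Injective (Bᵀ * B).mulVec := LinearMap.ker_eq_bot.mp hker
  have hunit : IsUnit (Bᵀ * B) := Matrix.mulVec_injective_iff_isUnit.mp hinj2
  have hdet : (Bᵀ * B).det ≠ 0 :=
    isUnit_iff_ne_zero.mp ((Matrix.isUnit_iff_isUnit_det _).mp hunit)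
  -- determinants of Gram matrices of the selected columns of `Aq` converge
  have hcont : Continuous (fun M : Matrix (Fin mm) (Fin nn) ℝ =>
      ((M.submatrix id g)ᵀ * (M.submatrix id g)).det) :=
    ((continuous_id.matrix_submatrix id g).matrix_transpose.matrix_mul
      (continuous_id.matrix_submatrix id g)).matrix_det
  have htend : Tendsto (fun q => (((Aq q).submatrix id g)ᵀ * ((Aq q).submatrix id g)).det)
      atTop (nhds ((Bᵀ * B).det)) := (hcont.tendsto A).comp hA
  obtain ⟨q, hq⟩ := (htend.eventually_ne hdet).exists
  -- so the selected columns of some `Aq q` are independent, forcing `rank (Aq q) ≥ k`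
  set S := (Aq q).submatrix id g with hS
  have hunit' : IsUnit (Sᵀ * S) :=
    (Matrix.isUnit_iff_isUnit_det _).mpr (isUnit_iff_ne_zero.mpr hq)
  have h1 : (Sᵀ * S).rank = k := by
    rw [Matrix.rank_of_isUnit _ hunit', Fintype.card_fin]
  have h2 : (Sᵀ * S).rank ≤ S.rank := Matrix.rank_mul_le_right _ _
  have hSfact : S = Aq q * ((1 : Matrix (Fin nn) (Fin nn) ℝ).submatrix id g) := by
    simpa using (Matrix.submatrix_mul (Aq q) (1 : Matrix (Fin nn) (Fin nn) ℝ)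
      id id g Function.bijective_id)
  have h3 : S.rank ≤ (Aq q).rank := by
    rw [hSfact]; exact Matrix.rank_mul_le_left _ _
  calc k = (Sᵀ * S).rank := h1.symm
    _ ≤ (Aq q).rank := h2.trans h3
    _ ≤ r := hr q

/-- `mbiObj` is a polynomial in the entries. -/
lemma mbiObj_eq {p m N : ℕ} (n : Fin p → ℕ)
    (H : Matrix (Fin m) (Fin N) ℝ)
    (G : ∀ j : Fin p, Matrix (Fin (n j)) (Fin N) ℝ)
    (F : ∀ j : Fin p, Matrix (Fin m) (Fin (n j)) ℝ) :
    mbiObj n H G F = ∑ i, ∑ k, ((H - ∑ j, F j * G j) i k) ^ 2 := by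
  rw [mbiObj, frobNorm, Real.sq_sqrt]
  positivity

open Filter in
/-- `mbiObj` is continuous under entrywise convergence. -/
lemma tendsto_mbiObj {p m N : ℕ} (n : Fin p → ℕ)
    (H : Matrix (Fin m) (Fin N) ℝ)
    (G : ∀ j : Fin p, Matrix (Fin (n j)) (Fin N) ℝ)
    (Fq : ℕ → ∀ j : Fin p, Matrix (Fin m) (Fin (n j)) ℝ)
    (FL : ∀ j : Fin p, Matrix (Fin m) (Fin (n j)) ℝ)
    (h : ∀ (j : Fin p) (i : Fin m) (k : Fin (n j)),
      Tendsto (fun q => Fq q j i k) atTop (nhds (FL j i k))) :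
    Tendsto (fun q => mbiObj n H G (Fq q)) atTop (nhds (mbiObj n H G FL)) := by
  simp only [mbiObj_eq, Matrix.sub_apply, Matrix.sum_apply, Matrix.mul_apply]
  refine tendsto_finset_sum _ fun i _ => tendsto_finset_sum _ fun k _ => ?_
  exact (tendsto_const_nhds.sub (tendsto_finset_sum _ fun j _ =>
    tendsto_finset_sum _ fun l _ => (h j i l).mul tendsto_const_nhds)).pow 2

theorem mbi_limit_is_coordinatewise_minimum
    {p m N : ℕ} (hp : 1 ≤ p) (n r : Fin p → ℕ)
    (H : Matrix (Fin m) (Fin N) ℝ)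
    (G : ∀ j : Fin p, Matrix (Fin (n j)) (Fin N) ℝ)
    (Fseq : ℕ → ∀ j : Fin p, Matrix (Fin m) (Fin (n j)) ℝ)
    (hMBI : IsMBISequence n r H G Fseq)
    (Flim : ∀ j : Fin p, Matrix (Fin m) (Fin (n j)) ℝ)
    (hconv : ∀ (j : Fin p) (i : Fin m) (k : Fin (n j)),
      Filter.Tendsto (fun q => Fseq q j i k) Filter.atTop (nhds (Flim j i k))) :
    ∀ j : Fin p, (Flim j).rank ≤ r j ∧
      ∀ X : Matrix (Fin m) (Fin (n j)) ℝ, X.rank ≤ r j →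
        mbiObj n H G Flim ≤ mbiObj n H G (Function.update Flim j X) := by
  intro j
  constructor
  · -- rank of the limit block
    refine rank_le_of_tendsto (fun q => Fseq q j) (Flim j) ?_ (fun q => hMBI.1 q j)
    refine tendsto_pi_nhds.mpr ?_
    intro i
    rw [tendsto_pi_nhds]
    exact hconv j i
  · intro X hX
    -- left side: the shifted sequence converges to `Flim`
    have hL : Filter.Tendsto (fun q => mbiObj n H G (Fseq (q + 1)))
        Filter.atTop (nhds (mbiObj n H G Flim)) :=
      tendsto_mbiObj n H G _ _ fun j' i k =>
        (hconv j' i k).comp (Filter.tendsto_add_atTop_nat 1)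
    -- right side: updated tuples converge to the updated limit
    have hR : Filter.Tendsto (fun q => mbiObj n H G (Function.update (Fseq q) j X))
        Filter.atTop (nhds (mbiObj n H G (Function.update Flim j X))) := by
      refine tendsto_mbiObj n H G _ _ fun j' i k => ?_
      by_cases hj : j' = j
      · subst hj
        simp only [Function.update_self]
        exact tendsto_const_nhds
      · simp only [Function.update_of_ne hj]
        exact hconv j' i k
    exact le_of_tendsto_of_tendsto' hL hR fun q => hMBI.2 q j X hX
end

section
/- Let (F^{(q)})_{q≥0} be an MBI sequence for the objective f(F₁,…,F_p) = ‖H − Σ_{j=1}^p F_j·G_j‖_F². If q₀ < q₁ < q₂ < … is a strictly increasing sequence of indices such that the subsequence F^{(q_s)} converges (entrywise) to a tuple F* = (F*₁,…,F*_p) as s → ∞, then F* is a coordinate-wise minimum point of f on the rank-constrained domain: for every index j, rank F*_j ≤ r_j and for every real m×n_j matrix X with rank X ≤ r_j one has f(F*₁,…,F*_p) ≤ f(F*₁,…,F*_{j−1}, X, F*_{j+1},…,F*_p). -/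
open Matrix

/-- Rank is lower semicontinuous: an entrywise limit of matrices of rank at most `r'`
has rank at most `r'`. -/
lemma rank_le_of_tendsto_s3 {m' n' r' : ℕ} (A : ℕ → Matrix (Fin m') (Fin n') ℝ)
    (B : Matrix (Fin m') (Fin n') ℝ) (hA : ∀ s, (A s).rank ≤ r')
    (h : ∀ i k, Filter.Tendsto (fun s => A s i k) Filter.atTop (nhds (B i k))) :
    B.rank ≤ r' := by
  by_contra hlt
  push_neg at hlt
  rw [Matrix.rank_eq_finrank_span_cols] at hlt
  obtain ⟨b, hbsub, hbspan, hbli⟩ := exists_linearIndependent ℝ (Set.range Bᵀ)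
  have hbfin : b.Finite := (Set.finite_range Bᵀ).subset hbsub
  haveI := hbfin.fintype
  have hcard : r' + 1 ≤ Fintype.card b := by
    rw [← Set.toFinset_card]
    rw [← finrank_span_set_eq_card hbli, hbspan]
    exact hlt
  obtain ⟨e⟩ := Function.Embedding.nonempty_of_card_le (by simpa using hcard :
    Fintype.card (Fin (r' + 1)) ≤ Fintype.card b)
  have hsel : ∀ i : Fin (r' + 1), ∃ k : Fin n', Bᵀ k = (e i : Fin m' → ℝ) := fun i =>
    hbsub (e i).2
  choose g hg using hsel
  have hliB : LinearIndependent ℝ (fun i : Fin (r' + 1) => Bᵀ (g i)) := by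
    have : (fun i : Fin (r' + 1) => Bᵀ (g i)) = (fun x : b => (x : Fin m' → ℝ)) ∘ e := by
      funext i; simp [hg i]
    rw [this]
    exact hbli.comp e e.injective
  have htend : Filter.Tendsto (fun s => fun i : Fin (r' + 1) => (A s)ᵀ (g i)) Filter.atTop
      (nhds (fun i => Bᵀ (g i))) := by
    rw [tendsto_pi_nhds]
    intro i
    rw [tendsto_pi_nhds]
    intro x
    exact h x (g i)
  have hopen : IsOpen { f : Fin (r' + 1) → (Fin m' → ℝ) | LinearIndependent ℝ f } :=
    isOpen_setOf_linearIndependent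
  have hev : ∀ᶠ s in Filter.atTop,
      LinearIndependent ℝ (fun i : Fin (r' + 1) => (A s)ᵀ (g i)) :=
    htend.eventually (hopen.mem_nhds hliB)
  obtain ⟨s, hs⟩ := hev.exists
  have hrank : r' + 1 ≤ (A s).rank := by
    rw [Matrix.rank_eq_finrank_span_cols]
    have h1 : Module.finrank ℝ
        (Submodule.span ℝ (Set.range fun i : Fin (r' + 1) => (A s)ᵀ (g i))) = r' + 1 := by
      rw [finrank_span_eq_card hs]; simp
    rw [← h1]
    apply Submodule.finrank_mono
    apply Submodule.span_mono
    rintro _ ⟨i, rfl⟩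
    exact ⟨g i, rfl⟩
  have := hA s
  omega

lemma mbiObj_continuous {p m N : ℕ} (n : Fin p → ℕ)
    (H : Matrix (Fin m) (Fin N) ℝ)
    (G : ∀ j : Fin p, Matrix (Fin (n j)) (Fin N) ℝ) :
    Continuous (mbiObj n H G) := by
  simp only [funext (mbiObj_eq n H G)]
  apply continuous_finset_sum
  intro i _
  apply continuous_finset_sum
  intro k _
  apply Continuous.pow
  simp only [Matrix.sub_apply, Matrix.sum_apply, Matrix.mul_apply]
  apply Continuous.sub continuous_const
  apply continuous_finset_sum
  intro j _
  apply continuous_finset_sum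
  intro l _
  exact ((continuous_apply j).matrix_elem i l).mul
    continuous_const

theorem mbi_subsequence_limit_is_coordinatewise_minimum
    {p m N : ℕ} (hp : 1 ≤ p) (n r : Fin p → ℕ)
    (H : Matrix (Fin m) (Fin N) ℝ)
    (G : ∀ j : Fin p, Matrix (Fin (n j)) (Fin N) ℝ)
    (Fseq : ℕ → ∀ j : Fin p, Matrix (Fin m) (Fin (n j)) ℝ)
    (hMBI : IsMBISequence n r H G Fseq)
    (q : ℕ → ℕ) (hq : StrictMono q)
    (Fstar : ∀ j : Fin p, Matrix (Fin m) (Fin (n j)) ℝ)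
    (hconv : ∀ (j : Fin p) (i : Fin m) (k : Fin (n j)),
      Filter.Tendsto (fun s => Fseq (q s) j i k) Filter.atTop (nhds (Fstar j i k))) :
    ∀ j : Fin p, (Fstar j).rank ≤ r j ∧
      ∀ X : Matrix (Fin m) (Fin (n j)) ℝ, X.rank ≤ r j →
        mbiObj n H G Fstar ≤ mbiObj n H G (Function.update Fstar j X) := by
  obtain ⟨hrk, himp⟩ := hMBI
  -- convergence in the product topology
  have hFt : Filter.Tendsto (fun s => Fseq (q s)) Filter.atTop (nhds Fstar) := by
    rw [tendsto_pi_nhds]; intro j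
    apply tendsto_pi_nhds.mpr; intro i
    rw [tendsto_pi_nhds]; intro k
    exact hconv j i k
  have hcont := mbiObj_continuous n H G
  -- the objective is nonincreasing along the sequence
  have hdec : ∀ t, mbiObj n H G (Fseq (t + 1)) ≤ mbiObj n H G (Fseq t) := by
    intro t
    have j0 : Fin p := ⟨0, hp⟩
    have := himp t j0 (Fseq t j0) (hrk t j0)
    rwa [Function.update_eq_self] at this
  have hanti : ∀ a b, a ≤ b → mbiObj n H G (Fseq b) ≤ mbiObj n H G (Fseq a) := by
    intro a b hab
    induction b with
    | zero => simp_all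
    | succ b ih =>
      rcases Nat.lt_or_ge a (b + 1) with hlt | hge
      · exact (hdec b).trans (ih (Nat.lt_succ_iff.mp hlt))
      · have : a = b + 1 := le_antisymm hab hge
        subst this; exact le_refl _
  intro j
  constructor
  · exact rank_le_of_tendsto_s3 (fun s => Fseq (q s) j) (Fstar j) (fun s => hrk (q s) j)
      (hconv j)
  · intro X hX
    -- pointwise inequalities
    have hstep : ∀ s, mbiObj n H G (Fseq (q (s + 1))) ≤
        mbiObj n H G (Function.update (Fseq (q s)) j X) := by
      intro s
      have h1 : q s + 1 ≤ q (s + 1) := hq (Nat.lt_succ_self s)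
      exact (hanti _ _ h1).trans (himp (q s) j X hX)
    -- limits of both sides
    have hleft : Filter.Tendsto (fun s => mbiObj n H G (Fseq (q (s + 1)))) Filter.atTop
        (nhds (mbiObj n H G Fstar)) := by
      exact (hcont.tendsto Fstar).comp (hFt.comp (Filter.tendsto_add_atTop_nat 1))
    have hupd : Filter.Tendsto (fun s => Function.update (Fseq (q s)) j X) Filter.atTop
        (nhds (Function.update Fstar j X)) := by
      rw [tendsto_pi_nhds]; intro j'
      by_cases hjj : j' = j
      · subst hjj
        simp only [Function.update_self]
        exact tendsto_const_nhds
      · simp only [Function.update_of_ne hjj]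
        apply tendsto_pi_nhds.mpr; intro i
        rw [tendsto_pi_nhds]; intro k
        exact hconv j' i k
    have hright : Filter.Tendsto (fun s => mbiObj n H G (Function.update (Fseq (q s)) j X))
        Filter.atTop (nhds (mbiObj n H G (Function.update Fstar j X))) :=
      (hcont.tendsto _).comp hupd
    exact le_of_tendsto_of_tendsto' hleft hright hstep
end

section
/- For every real m×n matrix C and every natural number r, a best rank-r approximation of C in the Frobenius norm exists: there is a real m×n matrix B with rank B ≤ r such that ‖C − B‖_F ≤ ‖C − B′‖_F for every real m×n matrix B′ with rank B′ ≤ r. -/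
open Finset Matrix RealInnerProductSpace

lemma frobNorm_nonneg {m n : Type*} [Fintype m] [Fintype n] (A : Matrix m n ℝ) :
    0 ≤ frobNorm A := Real.sqrt_nonneg _

lemma frobNorm_eq_norm {m n : ℕ} (A : Matrix (Fin m) (Fin n) ℝ) :
    frobNorm A = ‖((WithLp.equiv 2 (Fin m × Fin n → ℝ)).symm
      (fun p => A p.1 p.2) : EuclideanSpace ℝ (Fin m × Fin n))‖ := by
  rw [EuclideanSpace.norm_eq, frobNorm, Fintype.sum_prod_type]
  congr 1
  refine Finset.sum_congr rfl fun i _ => Finset.sum_congr rfl fun j _ => ?_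
  rw [Real.norm_eq_abs, sq_abs]
  rfl

lemma frobNorm_add_le {m n : ℕ} (X Y : Matrix (Fin m) (Fin n) ℝ) :
    frobNorm (X + Y) ≤ frobNorm X + frobNorm Y := by
  rw [frobNorm_eq_norm, frobNorm_eq_norm, frobNorm_eq_norm]
  have : ((WithLp.equiv 2 (Fin m × Fin n → ℝ)).symm
      (fun p => (X + Y) p.1 p.2) : EuclideanSpace ℝ (Fin m × Fin n))
      = (WithLp.equiv 2 (Fin m × Fin n → ℝ)).symm (fun p => X p.1 p.2)
        + (WithLp.equiv 2 (Fin m × Fin n → ℝ)).symm (fun p => Y p.1 p.2) := rfl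
  rw [this]
  exact norm_add_le _ _

lemma frobNorm_neg {m n : ℕ} (X : Matrix (Fin m) (Fin n) ℝ) :
    frobNorm (-X) = frobNorm X := by
  unfold frobNorm
  congr 1
  refine Finset.sum_congr rfl fun i _ => Finset.sum_congr rfl fun j _ => ?_
  rw [Matrix.neg_apply, neg_sq]


/-- Bounded rank factorization. -/
lemma exists_bdd_factorization {m n r : ℕ} (B : Matrix (Fin m) (Fin n) ℝ)
    (hB : B.rank ≤ r) :
    ∃ (L : Matrix (Fin m) (Fin r) ℝ) (R : Matrix (Fin r) (Fin n) ℝ),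
      B = L * R ∧ (∀ i p, |L i p| ≤ 1) ∧
      (∀ p j, (R p j) ^ 2 ≤ ∑ i, ∑ j', (B i j') ^ 2) := by
  classical
  let e : EuclideanSpace ℝ (Fin m) ≃ₗ[ℝ] (Fin m → ℝ) := WithLp.linearEquiv 2 ℝ (Fin m → ℝ)
  let W : Submodule ℝ (EuclideanSpace ℝ (Fin m)) :=
    (LinearMap.range B.mulVecLin).map e.symm.toLinearMap
  have hkW : Module.finrank ℝ W ≤ r := by
    rw [show W = (LinearMap.range B.mulVecLin).map e.symm.toLinearMap from rfl,
      LinearEquiv.finrank_map_eq]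
    exact hB
  set k := Module.finrank ℝ W with hk
  let b := stdOrthonormalBasis ℝ W
  let v : Fin r → EuclideanSpace ℝ (Fin m) :=
    fun p => if h : (p : ℕ) < k then ((b ⟨p, h⟩ : W) : EuclideanSpace ℝ (Fin m)) else 0
  have hvnorm : ∀ p, ‖v p‖ ≤ 1 := by
    intro p
    by_cases h : (p : ℕ) < k
    · simp only [v, dif_pos h]
      rw [Submodule.norm_coe]
      exact le_of_eq (b.orthonormal.1 _)
    · simp [v, dif_neg h]
  have hrepr : ∀ x : EuclideanSpace ℝ (Fin m), x ∈ W → x = ∑ p : Fin r, ⟪v p, x⟫ • v p := by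
    intro x hx
    set w : W := ⟨x, hx⟩ with hw
    have h1 : ∑ i : Fin k, ⟪b i, w⟫ • b i = w := b.sum_repr' w
    have h2 : ∑ p : Fin r, ⟪v p, x⟫ • v p
        = ∑ i : Fin k, ⟪(b i : EuclideanSpace ℝ (Fin m)), x⟫ • (b i : EuclideanSpace ℝ (Fin m)) := by
      rw [← Finset.sum_filter_of_ne (p := fun p : Fin r => (p : ℕ) < k)
        (fun p _ hp => by by_contra hc; exact hp (by simp [v, dif_neg hc]))]
      refine Finset.sum_bij' (fun p hp => (⟨(p : ℕ), (Finset.mem_filter.mp hp).2⟩ : Fin k))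
        (fun i _ => Fin.castLE hkW i) ?_ ?_ ?_ ?_ ?_
      · intro a ha; exact Finset.mem_univ _
      · intro a ha
        refine Finset.mem_filter.mpr ⟨Finset.mem_univ _, a.2⟩
      · intro a ha; exact Fin.ext rfl
      · intro a ha; exact Fin.ext rfl
      · intro a ha
        have hak : (a : ℕ) < k := (Finset.mem_filter.mp ha).2
        simp only [v, dif_pos hak]
    rw [h2]
    calc x = ((w : W) : EuclideanSpace ℝ (Fin m)) := rfl
      _ = ((∑ i : Fin k, ⟪b i, w⟫ • b i : W) : EuclideanSpace ℝ (Fin m)) := by rw [h1]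
      _ = ∑ i : Fin k, ⟪b i, w⟫ • (b i : EuclideanSpace ℝ (Fin m)) := by push_cast; rfl
      _ = ∑ i : Fin k, ⟪(b i : EuclideanSpace ℝ (Fin m)), x⟫ • (b i : EuclideanSpace ℝ (Fin m)) := by
          refine Finset.sum_congr rfl fun i _ => ?_
          rw [Submodule.coe_inner]
  let L : Matrix (Fin m) (Fin r) ℝ := fun i p => v p i
  let col : Fin n → EuclideanSpace ℝ (Fin m) := fun j => (WithLp.equiv 2 (Fin m → ℝ)).symm (fun q => B q j)
  have hcolnorm : ∀ j, ‖col j‖ ^ 2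
      = ∑ i, (B i j) ^ 2 := by
    intro j
    rw [EuclideanSpace.norm_eq, Real.sq_sqrt (by positivity)]
    refine Finset.sum_congr rfl fun i _ => ?_
    rw [Real.norm_eq_abs, sq_abs]
    rfl
  refine ⟨L, Lᵀ * B, ?_, ?_, ?_⟩
  · ext i j
    have hcol : col j ∈ W := by
      refine ⟨B *ᵥ Pi.single j 1, ⟨Pi.single j 1, rfl⟩, ?_⟩
      simp only [Matrix.mulVec_single, mul_one]
      ext q; simp [e, col, Matrix.col]
    have hxr := congrArg (fun x : EuclideanSpace ℝ (Fin m) => x i) (hrepr _ hcol)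
    rw [Matrix.mul_apply]
    calc B i j = col j i := rfl
      _ = (∑ p : Fin r, ⟪v p, col j⟫ • v p) i := by
          rw [← hxr]
      _ = ∑ p : Fin r, ⟪v p, col j⟫ * v p i :=
          by simp [Finset.sum_apply]
      _ = ∑ p : Fin r, L i p * ((Lᵀ * B) p j) := by
          refine Finset.sum_congr rfl fun p _ => ?_
          rw [Matrix.mul_apply]
          have hip : ⟪v p, col j⟫
              = ∑ q, v p q * B q j := by
            simp only [PiLp.inner_apply, RCLike.inner_apply, conj_trivial]
            exact Finset.sum_congr rfl fun q _ => mul_comm _ _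
          rw [hip, mul_comm]
          rfl
  · intro i p
    have h1 : |L i p| = ‖v p i‖ := (Real.norm_eq_abs _).symm
    rw [h1]
    have h2 : ‖v p i‖ ^ 2 ≤ ∑ q, ‖v p q‖ ^ 2 :=
      Finset.single_le_sum (f := fun q => ‖v p q‖ ^ 2) (fun q _ => sq_nonneg _) (Finset.mem_univ i)
    calc ‖v p i‖ = Real.sqrt (‖v p i‖ ^ 2) := (Real.sqrt_sq (norm_nonneg _)).symm
      _ ≤ Real.sqrt (∑ q, ‖v p q‖ ^ 2) := Real.sqrt_le_sqrt h2
      _ = ‖v p‖ := (EuclideanSpace.norm_eq _).symm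
      _ ≤ 1 := hvnorm p
  · intro p j
    have hinner : (Lᵀ * B) p j
        = ⟪v p, col j⟫ := by
      rw [Matrix.mul_apply]
      simp only [PiLp.inner_apply, RCLike.inner_apply, conj_trivial, Matrix.transpose_apply]
      exact Finset.sum_congr rfl fun q _ => mul_comm _ _
    have hcs : |(Lᵀ * B) p j|
        ≤ ‖v p‖ * ‖col j‖ := by
      rw [hinner]; exact abs_real_inner_le_norm _ _
    have hvp2 : ‖v p‖ ^ 2 ≤ 1 := by
      have := hvnorm p
      nlinarith [norm_nonneg (v p)]
    calc (Lᵀ * B) p j ^ 2 = |(Lᵀ * B) p j| ^ 2 := (sq_abs _).symm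
      _ ≤ (‖v p‖ * ‖col j‖) ^ 2 := by
          apply pow_le_pow_left₀ (abs_nonneg _) hcs
      _ = ‖v p‖ ^ 2 * ‖col j‖ ^ 2 :=
          mul_pow _ _ _
      _ ≤ 1 * ‖col j‖ ^ 2 := by
          apply mul_le_mul_of_nonneg_right hvp2 (sq_nonneg _)
      _ = ∑ i, (B i j) ^ 2 := by rw [one_mul, hcolnorm]
      _ ≤ ∑ i, ∑ j', (B i j') ^ 2 := by
          refine Finset.sum_le_sum fun i _ => ?_
          exact Finset.single_le_sum (f := fun j' => (B i j') ^ 2)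
            (fun j' _ => sq_nonneg _) (Finset.mem_univ j)

theorem exists_best_rank_r_approximation
    {m n : ℕ} (C : Matrix (Fin m) (Fin n) ℝ) (r : ℕ) :
    ∃ B : Matrix (Fin m) (Fin n) ℝ, B.rank ≤ r ∧
      ∀ B' : Matrix (Fin m) (Fin n) ℝ, B'.rank ≤ r →
        frobNorm (C - B) ≤ frobNorm (C - B') := by
  classical
  set c : ℝ := 1 + 2 * frobNorm C with hc
  have hc1 : (1 : ℝ) ≤ c := by
    have := frobNorm_nonneg C; simp only [hc]; linarith
  have hc0 : (0 : ℝ) ≤ c := le_trans zero_le_one hc1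
  let f : Matrix (Fin m) (Fin n) ℝ → ℝ := fun X => ∑ i, ∑ j, (C i j - X i j) ^ 2
  have hfrob : ∀ X, frobNorm (C - X) = Real.sqrt (f X) := by
    intro X; unfold frobNorm; congr 1
  have hfnonneg : ∀ X, 0 ≤ f X := fun X => Finset.sum_nonneg fun i _ =>
    Finset.sum_nonneg fun j _ => sq_nonneg _
  have hfcont : Continuous f := by
    refine continuous_finset_sum _ fun i _ => continuous_finset_sum _ fun j _ => ?_
    have h1 : Continuous fun X : Matrix (Fin m) (Fin n) ℝ => X i j :=
      (continuous_apply j).comp (continuous_apply i)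
    exact (continuous_const.sub h1).pow 2
  let S1 : Set (Matrix (Fin m) (Fin r) ℝ) := {L | ∀ i j, L i j ∈ Set.Icc (-c) c}
  let S2 : Set (Matrix (Fin r) (Fin n) ℝ) := {R | ∀ i j, R i j ∈ Set.Icc (-c) c}
  have hS1 : IsCompact S1 := by
    have h2 : IsCompact {L : Fin m → Fin r → ℝ | ∀ i j, L i j ∈ Set.Icc (-c) c} := by
      have h : {L : Fin m → Fin r → ℝ | ∀ i j, L i j ∈ Set.Icc (-c) c}
          = Set.pi Set.univ (fun _ => Set.pi Set.univ fun _ => Set.Icc (-c) c) := by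
        ext L
        simp [Set.mem_univ_pi, Pi.le_def, forall_and]
      rw [h]
      exact isCompact_univ_pi fun _ => isCompact_univ_pi fun _ => isCompact_Icc
    exact h2
  have hS2 : IsCompact S2 := by
    have h2 : IsCompact {R : Fin r → Fin n → ℝ | ∀ i j, R i j ∈ Set.Icc (-c) c} := by
      have h : {R : Fin r → Fin n → ℝ | ∀ i j, R i j ∈ Set.Icc (-c) c}
          = Set.pi Set.univ (fun _ => Set.pi Set.univ fun _ => Set.Icc (-c) c) := by
        ext R
        simp [Set.mem_univ_pi, Pi.le_def, forall_and]
      rw [h]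
      exact isCompact_univ_pi fun _ => isCompact_univ_pi fun _ => isCompact_Icc
    exact h2
  let g : Matrix (Fin m) (Fin r) ℝ × Matrix (Fin r) (Fin n) ℝ → Matrix (Fin m) (Fin n) ℝ :=
    fun p => p.1 * p.2
  have hg : Continuous g := continuous_fst.matrix_mul continuous_snd
  let D : Set (Matrix (Fin m) (Fin n) ℝ) := {X | f X ≤ f 0}
  have hD : IsClosed D := isClosed_le hfcont continuous_const
  let K := (g '' (S1 ×ˢ S2)) ∩ D
  have hK : IsCompact K := ((hS1.prod hS2).image hg).inter_right hD
  have hmemIcc : (0 : ℝ) ∈ Set.Icc (-c) c := ⟨by linarith, hc0⟩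
  have hne : K.Nonempty := by
    refine ⟨0, ⟨(0, 0), ⟨⟨fun i j => hmemIcc, fun i j => hmemIcc⟩, ?_⟩⟩, show f 0 ≤ f 0 from le_refl _⟩
    simp [g]
  obtain ⟨B, hBK, hBmin⟩ := hK.exists_isMinOn hne hfcont.continuousOn
  obtain ⟨⟨⟨L0, R0⟩, _, hLR⟩, hBD⟩ := hBK
  refine ⟨B, ?_, ?_⟩
  · rw [← hLR]
    exact (Matrix.rank_mul_le_right L0 R0).trans
      ((Matrix.rank_le_card_height R0).trans (by simp))
  · intro B' hB'
    rw [hfrob, hfrob]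
    refine Real.sqrt_le_sqrt ?_
    by_cases hle : f B' ≤ f 0
    · -- factor B' with bounded entries
      obtain ⟨L, R, hfac, hLb, hRb⟩ := exists_bdd_factorization B' hB'
      have hCB' : frobNorm (C - B') ≤ frobNorm C := by
        rw [hfrob]
        have h0 : frobNorm C = Real.sqrt (f 0) := by
          unfold frobNorm
          congr 1
          simp only [f, Matrix.sub_apply, Matrix.zero_apply, sub_zero]
        rw [h0]
        exact Real.sqrt_le_sqrt hle
      have hB'norm : frobNorm B' ≤ 2 * frobNorm C := by
        have h1 : frobNorm B' ≤ frobNorm (B' - C) + frobNorm C := by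
          have h2 : B' = (B' - C) + C := by abel
          calc frobNorm B' = frobNorm ((B' - C) + C) := by rw [← h2]
            _ ≤ frobNorm (B' - C) + frobNorm C := frobNorm_add_le _ _
        have h3 : frobNorm (B' - C) = frobNorm (C - B') := by
          rw [show B' - C = -(C - B') by abel, frobNorm_neg]
        linarith [frobNorm_nonneg C, hCB', h3 ▸ h1]
      have hRc : ∀ p j, R p j ∈ Set.Icc (-c) c := by
        intro p j
        have h1 : |R p j| ≤ frobNorm B' := by
          have := hRb p j
          calc |R p j| = Real.sqrt ((R p j) ^ 2) := by
                rw [Real.sqrt_sq_eq_abs]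
            _ ≤ Real.sqrt (∑ i, ∑ j', (B' i j') ^ 2) := Real.sqrt_le_sqrt this
            _ = frobNorm B' := rfl
        have h2 : |R p j| ≤ c := by
          rw [hc]; linarith [h1.trans hB'norm]
        exact ⟨neg_le_of_abs_le h2, le_of_abs_le h2⟩
      have hLc : ∀ i p, L i p ∈ Set.Icc (-c) c := by
        intro i p
        have h2 : |L i p| ≤ c := (hLb i p).trans hc1
        exact ⟨neg_le_of_abs_le h2, le_of_abs_le h2⟩
      have hmem : B' ∈ K := ⟨⟨(L, R), ⟨hLc, hRc⟩, hfac.symm⟩, hle⟩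
      exact hBmin hmem
    · have h1 : f B ≤ f 0 := hBD
      linarith [not_le.mp hle]
end

section
/- Let (Ω, Σ, μ) be a probability space and let x : Ω → ℝ^m and y : Ω → ℝ^n be random vectors whose components all lie in L²(μ). Let S be the positive semidefinite square root of E_yy (a real symmetric positive semidefinite n×n matrix with S·S = E_yy), and let B be the Moore–Penrose inverse of S. Then for every real m×n matrix F, ∫_Ω ‖x(ω) − F·y(ω)‖₂² dμ(ω) = tr(E_xx) − ‖E_xy·B‖_F² + ‖E_xy·B − F·S‖_F², where ‖·‖_F is the Frobenius norm and tr the matrix trace. -/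
open MeasureTheory Matrix

private lemma l2_mul_integrable {Ω : Type*} [MeasurableSpace Ω] {μ : Measure Ω}
    {f g : Ω → ℝ} (hf : MemLp f 2 μ) (hg : MemLp g 2 μ) :
    Integrable (fun ω => f ω * g ω) μ := by
  have h : MemLp (f • g) 1 μ := by haveI : ENNReal.HolderTriple 2 2 1 := ⟨by simp only [inv_one]; exact ENNReal.inv_two_add_inv_two⟩; exact hg.smul (𝕜 := ℝ) hf (r := 1)
  have := memLp_one_iff_integrable.mp h
  simpa [Pi.smul_apply, smul_eq_mul, Pi.mul_def] using this

private lemma frobNorm_sq {m n : Type*} [Fintype m] [Fintype n] (A : Matrix m n ℝ) :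
    frobNorm A ^ 2 = ∑ i, ∑ j, (A i j) ^ 2 := by
  apply Real.sq_sqrt
  positivity

private lemma trace_mul_transpose {m n : Type*} [Fintype m] [Fintype n]
    (A D : Matrix m n ℝ) : (A * Dᵀ).trace = ∑ i, ∑ j, A i j * D i j := by
  simp [Matrix.trace, Matrix.diag, Matrix.mul_apply, Matrix.transpose_apply]

theorem mse_frobenius_expansion
    {Ω : Type*} [MeasurableSpace Ω] (μ : Measure Ω) [IsProbabilityMeasure μ]
    {m n : ℕ} (x : Ω → Fin m → ℝ) (y : Ω → Fin n → ℝ)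
    (hx : ∀ i, MemLp (fun ω => x ω i) 2 μ)
    (hy : ∀ j, MemLp (fun ω => y ω j) 2 μ)
    (Exx : Matrix (Fin m) (Fin m) ℝ) (hExx : ∀ i j, Exx i j = ∫ ω, x ω i * x ω j ∂μ)
    (Exy : Matrix (Fin m) (Fin n) ℝ) (hExy : ∀ i j, Exy i j = ∫ ω, x ω i * y ω j ∂μ)
    (Eyy : Matrix (Fin n) (Fin n) ℝ) (hEyy : ∀ i j, Eyy i j = ∫ ω, y ω i * y ω j ∂μ)
    (S : Matrix (Fin n) (Fin n) ℝ) (hS : S.PosSemidef) (hSS : S * S = Eyy)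
    (B : Matrix (Fin n) (Fin n) ℝ) (hB : IsMoorePenrose S B)
    (F : Matrix (Fin m) (Fin n) ℝ) :
    ∫ ω, ∑ i, (x ω i - F.mulVec (y ω) i) ^ 2 ∂μ =
      Exx.trace - frobNorm (Exy * B) ^ 2 + frobNorm (Exy * B - F * S) ^ 2 := by
  classical
  have hxy : ∀ i j, Integrable (fun ω => x ω i * y ω j) μ :=
    fun i j => l2_mul_integrable (hx i) (hy j)
  have hyy : ∀ i j, Integrable (fun ω => y ω i * y ω j) μ :=
    fun i j => l2_mul_integrable (hy i) (hy j)
  have hxxI : ∀ i j, Integrable (fun ω => x ω i * x ω j) μ :=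
    fun i j => l2_mul_integrable (hx i) (hx j)
  -- transpose of S
  have hST : Sᵀ = S := by
    have := hS.1
    simpa [Matrix.IsHermitian, Matrix.conjTranspose_eq_transpose_of_trivial] using this
  -- kernel fact : S.mulVec v = 0 → Exy.mulVec v = 0
  have hker : ∀ v : Fin n → ℝ, S.mulVec v = 0 → Exy.mulVec v = 0 := by
    intro v hv
    have hEv : Eyy.mulVec v = 0 := by
      rw [← hSS, ← Matrix.mulVec_mulVec, hv, Matrix.mulVec_zero]
    set g : Ω → ℝ := fun ω => ∑ j, v j * y ω j with hg
    have hg2 : MemLp g 2 μ := by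
      apply memLp_finset_sum (f := fun j ω => v j * y ω j)
      intro j _
      exact (hy j).const_mul (v j)
    have hgint : Integrable (fun ω => g ω * g ω) μ := l2_mul_integrable hg2 hg2
    have hint0 : ∫ ω, g ω * g ω ∂μ = 0 := by
      have hexp : ∀ ω, g ω * g ω = ∑ j, ∑ k, (v j * v k) * (y ω j * y ω k) := by
        intro ω
        rw [hg, Finset.sum_mul_sum]
        apply Finset.sum_congr rfl; intro j _
        apply Finset.sum_congr rfl; intro k _
        ring
      calc ∫ ω, g ω * g ω ∂μ
          = ∫ ω, ∑ j, ∑ k, (v j * v k) * (y ω j * y ω k) ∂μ := by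
            exact integral_congr_ae (Filter.Eventually.of_forall hexp)
        _ = ∑ j, ∑ k, (v j * v k) * Eyy j k := by
            rw [integral_finset_sum _ (fun j _ => integrable_finset_sum _
              (fun k _ => (hyy j k).const_mul _))]
            apply Finset.sum_congr rfl; intro j _
            rw [integral_finset_sum _ (fun k _ => (hyy j k).const_mul _)]
            apply Finset.sum_congr rfl; intro k _
            rw [integral_const_mul, hEyy]
        _ = v ⬝ᵥ Eyy.mulVec v := by
            simp only [dotProduct, Matrix.mulVec, Finset.mul_sum]
            apply Finset.sum_congr rfl; intro j _
            apply Finset.sum_congr rfl; intro k _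
            ring
        _ = 0 := by rw [hEv]; simp
    have hgz : (fun ω => g ω * g ω) =ᵐ[μ] 0 := by
      rw [← integral_eq_zero_iff_of_nonneg_ae
        (Filter.Eventually.of_forall fun ω => mul_self_nonneg (g ω)) hgint]
      exact hint0
    have hgz' : g =ᵐ[μ] 0 := by
      filter_upwards [hgz] with ω hω
      simpa [mul_self_eq_zero] using hω
    funext i
    have hxg : (fun ω => x ω i * g ω) =ᵐ[μ] 0 := by
      filter_upwards [hgz'] with ω hω
      simp [hω]
    have hI : ∫ ω, x ω i * g ω ∂μ = 0 := by
      rw [integral_congr_ae hxg]; simp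
    have hI2 : ∫ ω, x ω i * g ω ∂μ = Exy.mulVec v i := by
      have hexp : ∀ ω, x ω i * g ω = ∑ j, (x ω i * y ω j) * v j := by
        intro ω; rw [hg, Finset.mul_sum]
        apply Finset.sum_congr rfl; intro j _; ring
      calc ∫ ω, x ω i * g ω ∂μ
          = ∫ ω, ∑ j, (x ω i * y ω j) * v j ∂μ :=
            integral_congr_ae (Filter.Eventually.of_forall hexp)
        _ = ∑ j, Exy i j * v j := by
            rw [integral_finset_sum _ (fun j _ => (hxy i j).mul_const _)]
            apply Finset.sum_congr rfl; intro j _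
            rw [integral_mul_const, hExy]
        _ = Exy.mulVec v i := by simp [Matrix.mulVec, dotProduct]
    rw [← hI2, hI]; rfl
  -- projection identity
  have hproj : Exy * (B * S) = Exy := by
    have h0 : Exy * (B * S - 1) = 0 := by
      ext i j
      have hcol : S.mulVec (fun k => (B * S - 1) k j) = 0 := by
        have hSM : S * (B * S - 1) = 0 := by
          rw [Matrix.mul_sub, mul_one, ← Matrix.mul_assoc, hB.1, sub_self]
        funext i'
        have : (S * (B * S - 1)) i' j = 0 := by rw [hSM]; rfl
        simpa [Matrix.mul_apply, Matrix.mulVec, dotProduct] using this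
      have := hker _ hcol
      have : Exy.mulVec (fun k => (B * S - 1) k j) i = 0 := by rw [this]; rfl
      simpa [Matrix.mul_apply, Matrix.mulVec, dotProduct] using this
    have h1 : Exy * (B * S) - Exy * (1 : Matrix (Fin n) (Fin n) ℝ) = 0 := by
      rw [← Matrix.mul_sub]; exact h0
    rw [Matrix.mul_one] at h1
    exact sub_eq_zero.mp h1
  -- cross term identity
  have hI1 : ∑ i, ∑ j, (Exy * B) i j * (F * S) i j = ∑ i, ∑ j, F i j * Exy i j := by
    rw [← trace_mul_transpose]
    have : Exy * B * (F * S)ᵀ = Exy * Fᵀ := by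
      calc Exy * B * (F * S)ᵀ = Exy * B * (Sᵀ * Fᵀ) := by rw [Matrix.transpose_mul]
        _ = Exy * B * (S * Fᵀ) := by rw [hST]
        _ = (Exy * (B * S)) * Fᵀ := by simp only [Matrix.mul_assoc]
        _ = Exy * Fᵀ := by rw [hproj]
    rw [this, trace_mul_transpose]
    exact Finset.sum_congr rfl fun i _ => Finset.sum_congr rfl fun j _ => mul_comm _ _
  -- quadratic term identity
  have hI2 : ∑ i, ∑ j, (F * S) i j ^ 2 = ∑ i, ∑ j, ∑ k, F i j * F i k * Eyy j k := by
    have h1 : ∑ i, ∑ j, (F * S) i j ^ 2 = ∑ i, ∑ j, (F * S) i j * (F * S) i j := by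
      simp [sq]
    rw [h1, ← trace_mul_transpose]
    have h2 : F * S * (F * S)ᵀ = F * Eyy * Fᵀ := by
      calc F * S * (F * S)ᵀ = F * S * (Sᵀ * Fᵀ) := by rw [Matrix.transpose_mul]
        _ = F * S * (S * Fᵀ) := by rw [hST]
        _ = (F * (S * S)) * Fᵀ := by simp only [Matrix.mul_assoc]
        _ = F * Eyy * Fᵀ := by rw [hSS]
    rw [h2]
    simp only [Matrix.trace, Matrix.diag, Matrix.mul_apply, Finset.sum_mul, Matrix.transpose_apply]
    apply Finset.sum_congr rfl; intro i _
    rw [Finset.sum_comm]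
    apply Finset.sum_congr rfl; intro j _
    apply Finset.sum_congr rfl; intro k _
    ring
  -- - compute the LHS
  have hone : ∀ i, ∫ ω, (x ω i - F.mulVec (y ω) i) ^ 2 ∂μ
      = Exx i i - 2 * (∑ j, F i j * Exy i j) + ∑ j, ∑ k, F i j * F i k * Eyy j k := by
    intro i
    have hexp : ∀ ω, (x ω i - F.mulVec (y ω) i) ^ 2
        = x ω i * x ω i - (∑ j, (2 * F i j) * (x ω i * y ω j))
          + ∑ j, ∑ k, (F i j * F i k) * (y ω j * y ω k) := by
      intro ω
      have hmv : F.mulVec (y ω) i = ∑ j, F i j * y ω j := by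
        simp [Matrix.mulVec, dotProduct]
      rw [hmv, sub_sq]
      have h1 : 2 * x ω i * (∑ j, F i j * y ω j) = ∑ j, (2 * F i j) * (x ω i * y ω j) := by
        rw [Finset.mul_sum]
        apply Finset.sum_congr rfl; intro j _; ring
      have h2 : (∑ j, F i j * y ω j) ^ 2
          = ∑ j, ∑ k, (F i j * F i k) * (y ω j * y ω k) := by
        rw [sq, Finset.sum_mul_sum]
        apply Finset.sum_congr rfl; intro j _
        apply Finset.sum_congr rfl; intro k _
        ring
      rw [h1, h2, sq]
    have hi1 : Integrable (fun ω => ∑ j, (2 * F i j) * (x ω i * y ω j)) μ :=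
      integrable_finset_sum _ fun j _ => (hxy i j).const_mul _
    have hi2 : Integrable (fun ω => ∑ j, ∑ k, (F i j * F i k) * (y ω j * y ω k)) μ :=
      integrable_finset_sum _ fun j _ => integrable_finset_sum _ fun k _ =>
        (hyy j k).const_mul _
    calc ∫ ω, (x ω i - F.mulVec (y ω) i) ^ 2 ∂μ
        = ∫ ω, (x ω i * x ω i - (∑ j, (2 * F i j) * (x ω i * y ω j))
            + ∑ j, ∑ k, (F i j * F i k) * (y ω j * y ω k)) ∂μ :=
          integral_congr_ae (Filter.Eventually.of_forall hexp)
      _ = (∫ ω, x ω i * x ω i ∂μ) - (∫ ω, ∑ j, (2 * F i j) * (x ω i * y ω j) ∂μ)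
            + ∫ ω, ∑ j, ∑ k, (F i j * F i k) * (y ω j * y ω k) ∂μ := by
          rw [integral_add (show Integrable (fun ω => x ω i * x ω i
              - ∑ j, (2 * F i j) * (x ω i * y ω j)) μ from (hxxI i i).sub hi1) hi2,
            integral_sub (hxxI i i) hi1]
      _ = Exx i i - 2 * (∑ j, F i j * Exy i j) + ∑ j, ∑ k, F i j * F i k * Eyy j k := by
          rw [hExx]
          congr 1
          · congr 1
            rw [integral_finset_sum _ fun j _ => (hxy i j).const_mul _, Finset.mul_sum]
            apply Finset.sum_congr rfl; intro j _
            rw [integral_const_mul, hExy]; ring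
          · rw [integral_finset_sum _ (fun j _ => integrable_finset_sum _ fun k _ =>
              (hyy j k).const_mul _)]
            apply Finset.sum_congr rfl; intro j _
            rw [integral_finset_sum _ fun k _ => (hyy j k).const_mul _]
            apply Finset.sum_congr rfl; intro k _
            rw [integral_const_mul, hEyy]
  have hmem : ∀ i, MemLp (fun ω => x ω i - F.mulVec (y ω) i) 2 μ := by
    intro i
    have hmv : MemLp (fun ω => F.mulVec (y ω) i) 2 μ := by
      have h : MemLp (fun ω => ∑ j, F i j * y ω j) 2 μ :=
        memLp_finset_sum _ fun j _ => (hy j).const_mul (F i j)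
      have heq : (fun ω => ∑ j, F i j * y ω j) = (fun ω => F.mulVec (y ω) i) := by
        funext ω; simp [Matrix.mulVec, dotProduct]
      rwa [heq] at h
    exact (hx i).sub hmv
  have hL : ∫ ω, ∑ i, (x ω i - F.mulVec (y ω) i) ^ 2 ∂μ
      = ∑ i, (Exx i i - 2 * (∑ j, F i j * Exy i j)
          + ∑ j, ∑ k, F i j * F i k * Eyy j k) := by
    rw [integral_finset_sum _ fun i _ => (hmem i).integrable_sq]
    exact Finset.sum_congr rfl fun i _ => hone i
  rw [hL, frobNorm_sq, frobNorm_sq]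
  have hexpand : ∑ i, ∑ j, ((Exy * B - F * S) i j) ^ 2
      = ∑ i, ∑ j, ((Exy * B) i j) ^ 2
        - 2 * (∑ i, ∑ j, (Exy * B) i j * (F * S) i j)
        + ∑ i, ∑ j, ((F * S) i j) ^ 2 := by
    rw [Finset.mul_sum, ← Finset.sum_sub_distrib, ← Finset.sum_add_distrib]
    apply Finset.sum_congr rfl; intro i _
    rw [Finset.mul_sum, ← Finset.sum_sub_distrib, ← Finset.sum_add_distrib]
    apply Finset.sum_congr rfl; intro j _
    simp [Matrix.sub_apply]; ring
  rw [hexpand, hI1, hI2]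
  have htr : Exx.trace = ∑ i, Exx i i := by simp [Matrix.trace, Matrix.diag]
  rw [htr, Finset.sum_add_distrib, Finset.sum_sub_distrib, Finset.mul_sum]
  ring
end

section
/- Let (Ω, Σ, μ) be a probability space and let x : Ω → ℝ^m and y : Ω → ℝ^n be random vectors whose components all lie in L²(μ). Let S be the positive semidefinite square root of E_yy, let B be the Moore–Penrose inverse of S, and let B₊ be any best rank-r approximation of the matrix E_xy·B (in the Frobenius norm). Then the matrix F₀ = B₊·B has rank at most r and minimizes the mean square error among all rank-constrained estimators: for every real m×n matrix F with rank F ≤ r, ∫_Ω ‖x(ω) − F₀·y(ω)‖₂² dμ(ω) ≤ ∫_Ω ‖x(ω) − F·y(ω)‖₂² dμ(ω). -/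
open MeasureTheory Matrix

namespace KLTAux

/-- squared Frobenius norm -/
noncomputable def fro2 {m n : Type*} [Fintype m] [Fintype n] (A : Matrix m n ℝ) : ℝ :=
  ∑ i, ∑ j, (A i j) ^ 2

lemma fro2_nonneg {m n : Type*} [Fintype m] [Fintype n] (A : Matrix m n ℝ) : 0 ≤ fro2 A :=
  Finset.sum_nonneg fun _ _ => Finset.sum_nonneg fun _ _ => sq_nonneg _

lemma frobNorm_eq {m n : Type*} [Fintype m] [Fintype n] (A : Matrix m n ℝ) :
    frobNorm A = Real.sqrt (fro2 A) := rfl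

lemma fro2_eq_trace {m n : Type*} [Fintype m] [Fintype n] (A : Matrix m n ℝ) :
    fro2 A = (A * Aᵀ).trace := by
  simp [fro2, Matrix.trace, Matrix.mul_apply, Matrix.diag, sq]

lemma fro2_sub_comm {m n : Type*} [Fintype m] [Fintype n] (X Y : Matrix m n ℝ) :
    fro2 (X - Y) = fro2 (Y - X) := by
  unfold fro2
  refine Finset.sum_congr rfl fun i _ => Finset.sum_congr rfl fun j _ => ?_
  simp only [Matrix.sub_apply]
  ring

lemma fro2_le_of_frobNorm_le {m n : Type*} [Fintype m] [Fintype n]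
    {A C : Matrix m n ℝ} (h : frobNorm A ≤ frobNorm C) : fro2 A ≤ fro2 C := by
  rw [frobNorm_eq, frobNorm_eq] at h
  have h2 := pow_le_pow_left₀ (Real.sqrt_nonneg _) h 2
  rwa [Real.sq_sqrt (fro2_nonneg A), Real.sq_sqrt (fro2_nonneg C)] at h2

lemma mp_transpose {m n : Type*} [Fintype m] [Fintype n]
    {G : Matrix m n ℝ} {B : Matrix n m ℝ} (h : IsMoorePenrose G B) :
    IsMoorePenrose Gᵀ Bᵀ := by
  obtain ⟨a, b, c, d⟩ := h
  refine ⟨?_, ?_, ?_, ?_⟩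
  · rw [show Gᵀ * Bᵀ * Gᵀ = (G * B * G)ᵀ by
      rw [Matrix.transpose_mul, Matrix.transpose_mul, Matrix.mul_assoc], a]
  · rw [show Bᵀ * Gᵀ * Bᵀ = (B * G * B)ᵀ by
      rw [Matrix.transpose_mul, Matrix.transpose_mul, Matrix.mul_assoc], b]
  · rw [← Matrix.transpose_mul, Matrix.transpose_transpose, d]
  · rw [← Matrix.transpose_mul, Matrix.transpose_transpose, c]

lemma mp_unique {m n : Type*} [Fintype m] [Fintype n]
    {G : Matrix m n ℝ} {B1 B2 : Matrix n m ℝ}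
    (h1 : IsMoorePenrose G B1) (h2 : IsMoorePenrose G B2) : B1 = B2 := by
  obtain ⟨a1, b1, c1, d1⟩ := h1
  obtain ⟨a2, b2, c2, d2⟩ := h2
  have hGB : G * B1 = G * B2 := by
    have hGt : Gᵀ = Gᵀ * (G * B2) := by
      conv_lhs => rw [← a2]
      rw [Matrix.transpose_mul, c2]
    calc G * B1 = (G * B1)ᵀ := c1.symm
      _ = B1ᵀ * Gᵀ := Matrix.transpose_mul _ _
      _ = B1ᵀ * (Gᵀ * (G * B2)) := by rw [← hGt]
      _ = (B1ᵀ * Gᵀ) * (G * B2) := by rw [Matrix.mul_assoc]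
      _ = (G * B1)ᵀ * (G * B2) := by rw [Matrix.transpose_mul]
      _ = (G * B1) * (G * B2) := by rw [c1]
      _ = (G * B1 * G) * B2 := (Matrix.mul_assoc (G * B1) G B2).symm
      _ = G * B2 := by rw [a1]
  have hBG : B1 * G = B2 * G := by
    have hGt : Gᵀ = (B2 * G) * Gᵀ := by
      conv_lhs => rw [← a2]
      rw [show G * B2 * G = G * (B2 * G) from Matrix.mul_assoc _ _ _,
        Matrix.transpose_mul, d2]
    calc B1 * G = (B1 * G)ᵀ := d1.symm
      _ = Gᵀ * B1ᵀ := Matrix.transpose_mul _ _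
      _ = ((B2 * G) * Gᵀ) * B1ᵀ := by rw [← hGt]
      _ = (B2 * G) * (Gᵀ * B1ᵀ) := by rw [Matrix.mul_assoc]
      _ = (B2 * G) * (B1 * G)ᵀ := by rw [Matrix.transpose_mul]
      _ = (B2 * G) * (B1 * G) := by rw [d1]
      _ = B2 * (G * B1 * G) := by rw [Matrix.mul_assoc, Matrix.mul_assoc]
      _ = B2 * G := by rw [a1]
  calc B1 = B1 * G * B1 := b1.symm
    _ = B2 * G * B1 := by rw [hBG]
    _ = B2 * (G * B1) := Matrix.mul_assoc _ _ _
    _ = B2 * (G * B2) := by rw [hGB]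
    _ = B2 * G * B2 := (Matrix.mul_assoc _ _ _).symm
    _ = B2 := b2

lemma fro2_mul_proj_le {m n : Type*} [Fintype m] [Fintype n] [DecidableEq n]
    (A : Matrix m n ℝ) (P : Matrix n n ℝ) (hPt : Pᵀ = P) (hPP : P * P = P) :
    fro2 (A * P) ≤ fro2 A := by
  have h1 : (1 - P) * (1 - P) = (1 : Matrix n n ℝ) - P := by
    simp only [mul_sub, sub_mul, hPP, one_mul, mul_one]
    abel
  have hPA : P * Aᵀ = P * (P * Aᵀ) := by rw [← Matrix.mul_assoc, hPP]
  have key : (A * (1 - P)) * (A * (1 - P))ᵀ = A * Aᵀ - (A * P) * (A * P)ᵀ := by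
    rw [Matrix.transpose_mul, Matrix.transpose_sub, Matrix.transpose_one, hPt,
      Matrix.transpose_mul, hPt]
    calc A * (1 - P) * ((1 - P) * Aᵀ)
        = A * ((1 - P) * ((1 - P) * Aᵀ)) := Matrix.mul_assoc _ _ _
      _ = A * (((1 - P) * (1 - P)) * Aᵀ) := by rw [← Matrix.mul_assoc (1 - P) (1 - P) Aᵀ]
      _ = A * ((1 - P) * Aᵀ) := by rw [h1]
      _ = A * Aᵀ - A * (P * Aᵀ) := by
          rw [Matrix.sub_mul, Matrix.one_mul, Matrix.mul_sub]
      _ = A * Aᵀ - A * P * (P * Aᵀ) := by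
          conv_lhs => rw [hPA]
          rw [← Matrix.mul_assoc A P (P * Aᵀ)]
  have h2 : fro2 (A * (1 - P)) = fro2 A - fro2 (A * P) := by
    rw [fro2_eq_trace, fro2_eq_trace, fro2_eq_trace, key, Matrix.trace_sub]
  linarith [fro2_nonneg (A * (1 - P)), h2]

lemma expand_fro2 {m n : Type*} [Fintype m] [Fintype n]
    (F : Matrix m n ℝ) (S Eyy : Matrix n n ℝ) (Exy M : Matrix m n ℝ)
    (hSt : Sᵀ = S) (hSS : S * S = Eyy) (hMS : M * S = Exy) :
    fro2 (F * S - M) = (F * Eyy * Fᵀ).trace - 2 * (F * Exyᵀ).trace + fro2 M := by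
  have e1 : (F * S) * (F * S)ᵀ = F * Eyy * Fᵀ := by
    rw [Matrix.transpose_mul, hSt, ← hSS]
    rw [Matrix.mul_assoc F S (S * Fᵀ), ← Matrix.mul_assoc S S Fᵀ,
      ← Matrix.mul_assoc F (S * S) Fᵀ]
  have e2 : (F * S) * Mᵀ = F * Exyᵀ := by
    rw [Matrix.mul_assoc, show S * Mᵀ = Exyᵀ by
      rw [← hMS, Matrix.transpose_mul, hSt]]
  have e3 : M * (F * S)ᵀ = (F * Exyᵀ)ᵀ := by
    rw [← Matrix.transpose_transpose M, ← Matrix.transpose_mul, e2]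
  have key : (F * S - M) * (F * S - M)ᵀ
      = F * Eyy * Fᵀ - F * Exyᵀ - (F * Exyᵀ)ᵀ + M * Mᵀ := by
    rw [Matrix.transpose_sub, Matrix.mul_sub, Matrix.sub_mul, Matrix.sub_mul,
      e1, e2, e3]
    abel
  rw [fro2_eq_trace, fro2_eq_trace, key, Matrix.trace_add, Matrix.trace_sub,
    Matrix.trace_sub, Matrix.trace_transpose]
  ring

lemma sum_inner_eq {m n : Type*} [Fintype m] [Fintype n]
    (F Exy : Matrix m n ℝ) :
    (∑ i, ∑ j, F i j * Exy i j) = (F * Exyᵀ).trace := by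
  simp [Matrix.trace, Matrix.diag, Matrix.mul_apply]

lemma sum_quad_eq {m n : Type*} [Fintype m] [Fintype n]
    (F : Matrix m n ℝ) (Eyy : Matrix n n ℝ) :
    (∑ i, ∑ j, ∑ k, F i j * F i k * Eyy j k) = (F * Eyy * Fᵀ).trace := by
  simp only [Matrix.trace, Matrix.diag, Matrix.mul_apply, Matrix.transpose_apply,
    Finset.sum_mul]
  refine Finset.sum_congr rfl fun i _ => ?_
  rw [Finset.sum_comm]
  exact Finset.sum_congr rfl fun k _ => Finset.sum_congr rfl fun j _ => by ring

lemma integrable_mul2 {Ω : Type*} [MeasurableSpace Ω] {μ : Measure Ω} {f g : Ω → ℝ}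
    (hf : MemLp f 2 μ) (hg : MemLp g 2 μ) : Integrable (fun ω => f ω * g ω) μ :=
  memLp_one_iff_integrable.mp
    (hg.smul hf (r := 1))

lemma J_expand {Ω : Type*} [MeasurableSpace Ω] (μ : Measure Ω) {m n : ℕ}
    (x : Ω → Fin m → ℝ) (y : Ω → Fin n → ℝ)
    (hx : ∀ i, MemLp (fun ω => x ω i) 2 μ)
    (hy : ∀ j, MemLp (fun ω => y ω j) 2 μ)
    (Exy : Matrix (Fin m) (Fin n) ℝ) (hExy : ∀ i j, Exy i j = ∫ ω, x ω i * y ω j ∂μ)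
    (Eyy : Matrix (Fin n) (Fin n) ℝ) (hEyy : ∀ i j, Eyy i j = ∫ ω, y ω i * y ω j ∂μ)
    (F : Matrix (Fin m) (Fin n) ℝ) :
    ∫ ω, ∑ i, (x ω i - F.mulVec (y ω) i) ^ 2 ∂μ
      = (∫ ω, ∑ i, (x ω i) ^ 2 ∂μ) - 2 * (∑ i, ∑ j, F i j * Exy i j)
        + ∑ i, ∑ j, ∑ k, F i j * F i k * Eyy j k := by
  have hpt : (fun ω => ∑ i, (x ω i - F.mulVec (y ω) i) ^ 2)
      = fun ω => (∑ i, (x ω i) ^ 2)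
        - 2 * (∑ i, ∑ j, F i j * (x ω i * y ω j))
        + ∑ i, ∑ j, ∑ k, (F i j * F i k) * (y ω j * y ω k) := by
    funext ω
    have hterm : ∀ i, (x ω i - F.mulVec (y ω) i) ^ 2
        = (x ω i) ^ 2 - 2 * (∑ j, F i j * (x ω i * y ω j))
          + ∑ j, ∑ k, (F i j * F i k) * (y ω j * y ω k) := by
      intro i
      rw [show F.mulVec (y ω) i = ∑ j, F i j * y ω j from by
        simp [Matrix.mulVec, dotProduct]]
      rw [sub_sq, show (∑ j, F i j * y ω j) ^ 2
          = ∑ j, ∑ k, (F i j * y ω j) * (F i k * y ω k) from by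
        rw [pow_two, Finset.sum_mul_sum]]
      congr 1
      · congr 1
        rw [Finset.mul_sum, Finset.mul_sum]
        exact Finset.sum_congr rfl fun j _ => by ring
      · exact Finset.sum_congr rfl fun j _ => Finset.sum_congr rfl fun k _ => by ring
    rw [Finset.sum_congr rfl fun i _ => hterm i, Finset.sum_add_distrib,
      Finset.sum_sub_distrib, ← Finset.mul_sum]
  rw [hpt]
  have hA : Integrable (fun ω => ∑ i, (x ω i) ^ 2) μ :=
    integrable_finset_sum _ fun i _ => (hx i).integrable_sq
  have hBf : Integrable (fun ω => ∑ i, ∑ j, F i j * (x ω i * y ω j)) μ :=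
    integrable_finset_sum _ fun i _ => integrable_finset_sum _ fun j _ =>
      (integrable_mul2 (hx i) (hy j)).const_mul _
  have hB2 : Integrable (fun ω => 2 * ∑ i, ∑ j, F i j * (x ω i * y ω j)) μ :=
    hBf.const_mul 2
  have hC : Integrable (fun ω => ∑ i, ∑ j, ∑ k, (F i j * F i k) * (y ω j * y ω k)) μ :=
    integrable_finset_sum _ fun i _ => integrable_finset_sum _ fun j _ =>
      integrable_finset_sum _ fun k _ => (integrable_mul2 (hy j) (hy k)).const_mul _
  have hAB : Integrable (fun ω => (∑ i, (x ω i) ^ 2)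
      - 2 * ∑ i, ∑ j, F i j * (x ω i * y ω j)) μ := hA.sub hB2
  rw [integral_add hAB hC, integral_sub hA hB2]
  have hBval : ∫ ω, 2 * ∑ i, ∑ j, F i j * (x ω i * y ω j) ∂μ
      = 2 * (∑ i, ∑ j, F i j * Exy i j) := by
    rw [integral_const_mul]
    congr 1
    rw [integral_finset_sum (f := fun i ω => ∑ j, F i j * (x ω i * y ω j)) _
      fun i _ => integrable_finset_sum _ fun j _ =>
      (integrable_mul2 (hx i) (hy j)).const_mul _]
    refine Finset.sum_congr rfl fun i _ => ?_
    rw [integral_finset_sum (f := fun j ω => F i j * (x ω i * y ω j)) _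
      fun j _ => (integrable_mul2 (hx i) (hy j)).const_mul _]
    exact Finset.sum_congr rfl fun j _ => by rw [integral_const_mul, ← hExy]
  have hCval : ∫ ω, ∑ i, ∑ j, ∑ k, (F i j * F i k) * (y ω j * y ω k) ∂μ
      = ∑ i, ∑ j, ∑ k, F i j * F i k * Eyy j k := by
    rw [integral_finset_sum _ fun i _ => integrable_finset_sum _ fun j _ =>
      integrable_finset_sum _ fun k _ => (integrable_mul2 (hy j) (hy k)).const_mul _]
    refine Finset.sum_congr rfl fun i _ => ?_
    rw [integral_finset_sum _ fun j _ => integrable_finset_sum _ fun k _ =>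
      (integrable_mul2 (hy j) (hy k)).const_mul _]
    refine Finset.sum_congr rfl fun j _ => ?_
    rw [integral_finset_sum _ fun k _ => (integrable_mul2 (hy j) (hy k)).const_mul _]
    exact Finset.sum_congr rfl fun k _ => by rw [integral_const_mul, ← hEyy]
  rw [hBval, hCval]

end KLTAux

open KLTAux in
theorem klt_minimizes_rank_constrained_mse
    {Ω : Type*} [MeasurableSpace Ω] (μ : Measure Ω) [IsProbabilityMeasure μ]
    {m n : ℕ} (x : Ω → Fin m → ℝ) (y : Ω → Fin n → ℝ)
    (hx : ∀ i, MemLp (fun ω => x ω i) 2 μ)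
    (hy : ∀ j, MemLp (fun ω => y ω j) 2 μ)
    (Exy : Matrix (Fin m) (Fin n) ℝ) (hExy : ∀ i j, Exy i j = ∫ ω, x ω i * y ω j ∂μ)
    (Eyy : Matrix (Fin n) (Fin n) ℝ) (hEyy : ∀ i j, Eyy i j = ∫ ω, y ω i * y ω j ∂μ)
    (S : Matrix (Fin n) (Fin n) ℝ) (hS : S.PosSemidef) (hSS : S * S = Eyy)
    (B : Matrix (Fin n) (Fin n) ℝ) (hB : IsMoorePenrose S B)
    (r : ℕ) (Bplus : Matrix (Fin m) (Fin n) ℝ)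
    (hBplusRank : Bplus.rank ≤ r)
    (hBplusBest : ∀ B' : Matrix (Fin m) (Fin n) ℝ, B'.rank ≤ r →
      frobNorm (Exy * B - Bplus) ≤ frobNorm (Exy * B - B')) :
    (Bplus * B).rank ≤ r ∧
      ∀ F : Matrix (Fin m) (Fin n) ℝ, F.rank ≤ r →
        ∫ ω, ∑ i, (x ω i - (Bplus * B).mulVec (y ω) i) ^ 2 ∂μ ≤
          ∫ ω, ∑ i, (x ω i - F.mulVec (y ω) i) ^ 2 ∂μ := by
  have hst : Sᵀ = S := by simpa using hS.isHermitian.eq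
  -- the kernel property: S v = 0 implies Exy v = 0
  have hker : ∀ v : Fin n → ℝ, S.mulVec v = 0 → Exy.mulVec v = 0 := by
    intro v hv
    have hEv : Eyy.mulVec v = 0 := by
      rw [← hSS, ← Matrix.mulVec_mulVec, hv, Matrix.mulVec_zero]
    set g : Ω → ℝ := fun ω => ∑ j, v j * y ω j with hg
    have hgmem : MemLp g 2 μ := memLp_finset_sum _ fun j _ => (hy j).const_mul _
    have hg_int : Integrable (fun ω => g ω ^ 2) μ := hgmem.integrable_sq
    have hint0 : ∫ ω, g ω ^ 2 ∂μ = 0 := by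
      have hexp : (fun ω => g ω ^ 2)
          = fun ω => ∑ j, ∑ k, (v j * v k) * (y ω j * y ω k) := by
        funext ω
        rw [hg, pow_two, Finset.sum_mul_sum]
        exact Finset.sum_congr rfl fun j _ => Finset.sum_congr rfl fun k _ => by ring
      rw [hexp, integral_finset_sum _ fun j _ => integrable_finset_sum _ fun k _ =>
        (integrable_mul2 (hy j) (hy k)).const_mul _]
      have heach : ∀ j, ∫ ω, ∑ k, (v j * v k) * (y ω j * y ω k) ∂μ
          = v j * (Eyy.mulVec v j) := by
        intro j
        rw [integral_finset_sum _ fun k _ => (integrable_mul2 (hy j) (hy k)).const_mul _]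
        rw [show Eyy.mulVec v j = ∑ k, Eyy j k * v k from by
          simp [Matrix.mulVec, dotProduct], Finset.mul_sum]
        refine Finset.sum_congr rfl fun k _ => ?_
        rw [integral_const_mul, hEyy]
        ring
      rw [Finset.sum_congr rfl fun j _ => heach j]
      simp [hEv]
    have hgz : (fun ω => g ω ^ 2) =ᵐ[μ] 0 :=
      (integral_eq_zero_iff_of_nonneg (fun ω => sq_nonneg _) hg_int).mp hint0
    have hgz' : g =ᵐ[μ] 0 := hgz.mono fun ω h => by
      have h2 : g ω ^ 2 = 0 := h
      simpa using pow_eq_zero_iff (n := 2) (by norm_num) |>.mp h2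
    funext i
    have h1 : Exy.mulVec v i = ∫ ω, x ω i * g ω ∂μ := by
      have hfe : (fun ω => x ω i * g ω)
          = fun ω => ∑ j, v j * (x ω i * y ω j) := by
        funext ω
        rw [hg, Finset.mul_sum]
        exact Finset.sum_congr rfl fun j _ => by ring
      rw [hfe, integral_finset_sum _ fun j _ =>
        (integrable_mul2 (hx i) (hy j)).const_mul _]
      rw [show Exy.mulVec v i = ∑ j, Exy i j * v j from by
        simp [Matrix.mulVec, dotProduct]]
      refine Finset.sum_congr rfl fun j _ => ?_
      rw [integral_const_mul, hExy]
      ring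
    have h2 : ∫ ω, x ω i * g ω ∂μ = 0 := by
      have hz : (fun ω => x ω i * g ω) =ᵐ[μ] 0 := hgz'.mono fun ω h => by
        simp only [Pi.zero_apply] at h ⊢
        rw [h, mul_zero]
      rw [integral_congr_ae hz]
      simp
    simpa using h1.trans h2
  -- Exy is invariant under the projection B * S on the right
  have hExyBS : Exy * (B * S) = Exy := by
    have hSsub : S * (B * S) = S := by rw [← Matrix.mul_assoc, hB.1]
    ext i c
    have hvz : S.mulVec (fun j => (B * S) j c - (1 : Matrix (Fin n) (Fin n) ℝ) j c) = 0 := by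
      funext k
      have hk : (S * (B * S)) k c - (S * (1 : Matrix (Fin n) (Fin n) ℝ)) k c = 0 := by
        rw [hSsub, Matrix.mul_one, sub_self]
      calc S.mulVec (fun j => (B * S) j c - (1 : Matrix (Fin n) (Fin n) ℝ) j c) k
          = ∑ j, S k j * ((B * S) j c - (1 : Matrix (Fin n) (Fin n) ℝ) j c) := by
            simp [Matrix.mulVec, dotProduct]
        _ = (∑ j, S k j * (B * S) j c)
            - ∑ j, S k j * (1 : Matrix (Fin n) (Fin n) ℝ) j c := by
            rw [← Finset.sum_sub_distrib]
            exact Finset.sum_congr rfl fun j _ => by ring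
        _ = (S * (B * S)) k c - (S * (1 : Matrix (Fin n) (Fin n) ℝ)) k c := by rw [Matrix.mul_apply, Matrix.mul_apply]
        _ = 0 := hk
    have h0 := congrFun (hker _ hvz) i
    have hcalc : Exy.mulVec (fun j => (B * S) j c - (1 : Matrix (Fin n) (Fin n) ℝ) j c) i
        = (Exy * (B * S)) i c - Exy i c := by
      calc Exy.mulVec (fun j => (B * S) j c - (1 : Matrix (Fin n) (Fin n) ℝ) j c) i
          = ∑ j, Exy i j * ((B * S) j c - (1 : Matrix (Fin n) (Fin n) ℝ) j c) := by
            simp [Matrix.mulVec, dotProduct]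
        _ = (∑ j, Exy i j * (B * S) j c)
            - ∑ j, Exy i j * (1 : Matrix (Fin n) (Fin n) ℝ) j c := by
            rw [← Finset.sum_sub_distrib]
            exact Finset.sum_congr rfl fun j _ => by ring
        _ = (Exy * (B * S)) i c - (Exy * (1 : Matrix (Fin n) (Fin n) ℝ)) i c := by
            rw [Matrix.mul_apply, Matrix.mul_apply]
        _ = (Exy * (B * S)) i c - Exy i c := by rw [Matrix.mul_one]
    have hfin : (Exy * (B * S)) i c - Exy i c = 0 := by
      rw [← hcalc]
      simpa using h0
    exact sub_eq_zero.mp hfin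
  -- B is symmetric and commutes with S
  have hBt : Bᵀ = B := by
    have h1 : IsMoorePenrose S Bᵀ := by
      have := mp_transpose hB
      rwa [hst] at this
    exact mp_unique h1 hB
  have hSBcomm : S * B = B * S := by
    conv_lhs => rw [← hst, ← hBt, ← Matrix.transpose_mul]
    rw [hB.2.2.2]
  have hPt : (B * S)ᵀ = B * S := hB.2.2.2
  have hPP : (B * S) * (B * S) = B * S := by
    rw [Matrix.mul_assoc B S (B * S), ← Matrix.mul_assoc S B S, hB.1]
  have hBBS : B * (B * S) = B := by
    rw [← hSBcomm, ← Matrix.mul_assoc, hB.2.1]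
  have hMP : (Exy * B) * (B * S) = Exy * B := by
    rw [Matrix.mul_assoc, hBBS]
  have hMS : (Exy * B) * S = Exy := by
    rw [Matrix.mul_assoc, hExyBS]
  constructor
  · exact le_trans (Matrix.rank_mul_le_left _ _) hBplusRank
  · intro F hF
    rw [J_expand μ x y hx hy Exy hExy Eyy hEyy, J_expand μ x y hx hy Exy hExy Eyy hEyy]
    have hkey : ∀ G : Matrix (Fin m) (Fin n) ℝ,
        (∑ i, ∑ j, ∑ k, G i j * G i k * Eyy j k) - 2 * (∑ i, ∑ j, G i j * Exy i j)
          = fro2 (G * S - Exy * B) - fro2 (Exy * B) := by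
      intro G
      rw [KLTAux.expand_fro2 G S Eyy Exy (Exy * B) hst hSS hMS,
        KLTAux.sum_inner_eq, KLTAux.sum_quad_eq]
      ring
    have hineq : fro2 ((Bplus * B) * S - Exy * B) ≤ fro2 (F * S - Exy * B) := by
      have h2 : (Bplus * B) * S - Exy * B = (Bplus - Exy * B) * (B * S) := by
        rw [Matrix.sub_mul, hMP, Matrix.mul_assoc]
      calc fro2 ((Bplus * B) * S - Exy * B) = fro2 ((Bplus - Exy * B) * (B * S)) := by
            rw [h2]
        _ ≤ fro2 (Bplus - Exy * B) := fro2_mul_proj_le _ _ hPt hPP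
        _ = fro2 (Exy * B - Bplus) := fro2_sub_comm _ _
        _ ≤ fro2 (Exy * B - F * S) := by
            have hr : (F * S).rank ≤ r := le_trans (Matrix.rank_mul_le_left F S) hF
            exact fro2_le_of_frobNorm_le (hBplusBest (F * S) hr)
        _ = fro2 (F * S - Exy * B) := fro2_sub_comm _ _
    linarith [hkey (Bplus * B), hkey F, hineq]
end
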